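/- Let 1 ≤ N ≤ S be integers and let σ ≥ 0, ξ ≥ 0 be real numbers. For a nondecreasingly sorted vector u ∈ (ℝ⁺)^N, let pad(u) ∈ (ℝ⁺)^S denote the vector (0,...,0,u(1),...,u(N)) obtained by prepending S−N zeros. Then pad(sort([u + σ·e₁ − ξ·1_N]⁺)) = sort([pad(u) + σ·e_{S−N+1} − ξ·1_S]⁺); that is, the padded Kiefer–Wolfowitz recursion of the N-server system coincides with one step of the map G̃^{S−N+1} on S coordinates applied to the padded vector. -/
import Mathlib


open Finset

/-- The nondecreasing rearrangement of a finite real vector. -/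
noncomputable def sortVec {S : ℕ} (u : Fin S → ℝ) : Fin S → ℝ := u ∘ Tuple.sort u

/-- The Schur-convex semi-ordering `≺_c` : equal total sums, and each tail sum
(from the second coordinate on) of the sorted version of `u` is dominated by that of `v`. -/
def schurLE {S : ℕ} (u v : Fin S → ℝ) : Prop :=
  (∑ i, u i = ∑ i, v i) ∧
  ∀ k : Fin S, 1 ≤ (k : ℕ) →
    ∑ i ∈ Finset.Ici k, sortVec u i ≤ ∑ i ∈ Finset.Ici k, sortVec v i

/-- The semi-ordering `≺_*` : every tail sum of `u` is dominated by that of `v`. -/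
def starLE {S : ℕ} (u v : Fin S → ℝ) : Prop :=
  ∀ k : Fin S, ∑ i ∈ Finset.Ici k, u i ≤ ∑ i ∈ Finset.Ici k, v i

/-- The semi-ordering `≺_P` : `u ≺_* v` and `u(ℓ) ≤ v(ℓ)` for every `ℓ ≥ P`. -/
def precP {S : ℕ} (P : Fin S) (u v : Fin S → ℝ) : Prop :=
  starLE u v ∧ ∀ ℓ : Fin S, P ≤ ℓ → u ℓ ≤ v ℓ

/-- The map `G̃^P : u ↦ sort([u + σ·e_P − ξ·1]⁺)`.  For `P` the first index,
this is the Kiefer–Wolfowitz map `G`. -/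
noncomputable def GP {S : ℕ} (σ ξ : ℝ) (P : Fin S) (u : Fin S → ℝ) : Fin S → ℝ :=
  sortVec (fun i => max (u i + (if i = P then σ else 0) - ξ) 0)

/-- The vector of `ℝ^S` obtained from a vector of `ℝ^N` (`N ≤ S`) by prepending
`S − N` zero coordinates. -/
def pad {N S : ℕ} (hNS : N ≤ S) (u : Fin N → ℝ) : Fin S → ℝ :=
  fun i => if h : S - N ≤ (i : ℕ) then u ⟨(i : ℕ) - (S - N), by have := i.isLt; omega⟩ else 0

/-- Extend a permutation of `Fin N` to `Fin S` fixing the first `S - N` coordinates. -/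
def shiftPerm {N S : ℕ} (hNS : N ≤ S) (π : Equiv.Perm (Fin N)) : Equiv.Perm (Fin S) where
  toFun i := if hi : S - N ≤ (i : ℕ) then
      ⟨S - N + (π ⟨(i : ℕ) - (S - N), by have := i.isLt; omega⟩ : Fin N),
        by have := (π ⟨(i : ℕ) - (S - N), by have := i.isLt; omega⟩).isLt; omega⟩ else i
  invFun i := if hi : S - N ≤ (i : ℕ) then
      ⟨S - N + (π.symm ⟨(i : ℕ) - (S - N), by have := i.isLt; omega⟩ : Fin N),
        by have := (π.symm ⟨(i : ℕ) - (S - N), by have := i.isLt; omega⟩).isLt; omega⟩ else i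
  left_inv i := by
    by_cases hi : S - N ≤ (i : ℕ)
    · simp only [dif_pos hi]
      have h2 : S - N ≤ S - N + (π ⟨(i : ℕ) - (S - N), by have := i.isLt; omega⟩ : Fin N) :=
        Nat.le_add_right _ _
      simp only [dif_pos h2]
      apply Fin.ext
      simp only [Nat.add_sub_cancel_left]
      have : (⟨((π ⟨(i : ℕ) - (S - N), by have := i.isLt; omega⟩ : Fin N) : ℕ), by
          have := (π ⟨(i : ℕ) - (S - N), by have := i.isLt; omega⟩).isLt; omega⟩ : Fin N)
          = π ⟨(i : ℕ) - (S - N), by have := i.isLt; omega⟩ := by apply Fin.ext; simp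
      rw [this, Equiv.symm_apply_apply]
      simp; omega
    · simp only [dif_neg hi]
  right_inv i := by
    by_cases hi : S - N ≤ (i : ℕ)
    · simp only [dif_pos hi]
      have h2 : S - N ≤ S - N + (π.symm ⟨(i : ℕ) - (S - N), by have := i.isLt; omega⟩ : Fin N) :=
        Nat.le_add_right _ _
      simp only [dif_pos h2]
      apply Fin.ext
      simp only [Nat.add_sub_cancel_left]
      have : (⟨((π.symm ⟨(i : ℕ) - (S - N), by have := i.isLt; omega⟩ : Fin N) : ℕ), by
          have := (π.symm ⟨(i : ℕ) - (S - N), by have := i.isLt; omega⟩).isLt; omega⟩ : Fin N)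
          = π.symm ⟨(i : ℕ) - (S - N), by have := i.isLt; omega⟩ := by apply Fin.ext; simp
      rw [this, Equiv.apply_symm_apply]
      simp; omega
    · simp only [dif_neg hi]

theorem pad_comp_shiftPerm_aux {N S : ℕ} (hNS : N ≤ S) (π : Equiv.Perm (Fin N)) (v : Fin N → ℝ) :
    (fun (i : Fin S) => if h : S - N ≤ (i : ℕ) then v ⟨(i : ℕ) - (S - N), by have := i.isLt; omega⟩ else 0)
      ∘ (shiftPerm hNS π)
    = fun (i : Fin S) => if h : S - N ≤ (i : ℕ) then (v ∘ π) ⟨(i : ℕ) - (S - N), by have := i.isLt; omega⟩ else 0 := by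
  funext i
  by_cases hi : S - N ≤ (i : ℕ)
  · simp only [Function.comp_apply, shiftPerm, Equiv.coe_fn_mk, dif_pos hi]
    have h2 : S - N ≤ S - N + (π ⟨(i : ℕ) - (S - N), by have := i.isLt; omega⟩ : Fin N) :=
      Nat.le_add_right _ _
    simp only [dif_pos h2, Nat.add_sub_cancel_left]
  · simp only [Function.comp_apply, shiftPerm, Equiv.coe_fn_mk, dif_neg hi]

theorem pad_comp_shiftPerm {N S : ℕ} (hNS : N ≤ S) (π : Equiv.Perm (Fin N)) (v : Fin N → ℝ) :
    pad hNS v ∘ (shiftPerm hNS π) = pad hNS (v ∘ π) := by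
  unfold pad
  exact pad_comp_shiftPerm_aux hNS π v

theorem sortVec_eq_of_monotone {S : ℕ} {g : Fin S → ℝ} (hg : Monotone g) : sortVec g = g := by
  unfold sortVec
  rw [Tuple.sort_eq_refl_iff_monotone.mpr hg]
  rfl

theorem sortVec_comp_perm {S : ℕ} (g : Fin S → ℝ) (σ : Equiv.Perm (Fin S)) :
    sortVec (g ∘ σ) = sortVec g :=
  Tuple.comp_perm_comp_sort_eq_comp_sort

theorem pad_monotone {N S : ℕ} (hNS : N ≤ S) {v : Fin N → ℝ} (hv : Monotone v)
    (hv0 : ∀ i, 0 ≤ v i) : Monotone (pad hNS v) := by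
  intro i j hij
  unfold pad
  by_cases hi : S - N ≤ (i : ℕ)
  · have hj : S - N ≤ (j : ℕ) := le_trans hi hij
    rw [dif_pos hi, dif_pos hj]
    exact hv (by simp only [Fin.mk_le_mk]; omega)
  · rw [dif_neg hi]
    by_cases hj : S - N ≤ (j : ℕ)
    · rw [dif_pos hj]; exact hv0 _
    · rw [dif_neg hj]

theorem sortVec_pad {N S : ℕ} (hNS : N ≤ S) (v : Fin N → ℝ) (hv0 : ∀ i, 0 ≤ v i) :
    sortVec (pad hNS v) = pad hNS (sortVec v) := by
  have h1 : sortVec (pad hNS v) = sortVec (pad hNS v ∘ shiftPerm hNS (Tuple.sort v)) :=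
    (sortVec_comp_perm _ _).symm
  rw [h1, pad_comp_shiftPerm]
  have h2 : (v ∘ Tuple.sort v) = sortVec v := rfl
  rw [h2]
  exact sortVec_eq_of_monotone (pad_monotone hNS (Tuple.monotone_sort v) (fun i => hv0 _))

/-- padding the `N`-server Kiefer–Wolfowitz recursion with `S − N` zeros
coincides with one step of `G̃^{S−N+1}` on `S` coordinates applied to the padded vector. -/
theorem pad_KW_eq_GP {N S : ℕ} (hN : 0 < N) (hNS : N ≤ S) (σ ξ : ℝ)
    (hσ : 0 ≤ σ) (hξ : 0 ≤ ξ)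
    (u : Fin N → ℝ) (hu : Monotone u) (hu0 : ∀ i, 0 ≤ u i) :
    pad hNS (sortVec (fun i => max (u i + (if (i : ℕ) = 0 then σ else 0) - ξ) 0)) =
      sortVec (fun i : Fin S =>
        max (pad hNS u i + (if (i : ℕ) = S - N then σ else 0) - ξ) 0) := by
  set v : Fin N → ℝ := fun i => max (u i + (if (i : ℕ) = 0 then σ else 0) - ξ) 0 with hv
  have hv0 : ∀ i, 0 ≤ v i := fun i => le_max_right _ _
  have hfun : (fun i : Fin S =>
      max (pad hNS u i + (if (i : ℕ) = S - N then σ else 0) - ξ) 0) = pad hNS v := by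
    funext i
    by_cases hi : S - N ≤ (i : ℕ)
    · simp only [pad, dif_pos hi, hv]
      have hcond : ((i : ℕ) - (S - N) = 0) ↔ ((i : ℕ) = S - N) := by omega
      simp only [hcond]
    · simp only [pad, dif_neg hi, if_neg (show ¬(i : ℕ) = S - N by omega), add_zero, zero_add]
      exact max_eq_right (by linarith)
  rw [hfun]
  exact (sortVec_pad hNS v hv0).symm
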